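/- Let (R, <, +, 0) be a densely ordered abelian group with the order topology, and let X ⊆ R be a well-ordered subset (i.e. (X, <) is a well order), so that every element of X has a successor in X or is the maximum. For ε > 0 define X(ε) = { a ∈ X : (a, a + ε) ∩ X = ∅ }. Then the family {X(ε) : ε > 0} is an increasing (as ε decreases) covering of X by closed discrete subsets of R. -/

import Mathlib

open Set Topology

theorem stmt8 {R : Type*} [AddCommGroup R] [LinearOrder R] [IsOrderedAddMonoid R] [DenselyOrdered R] [Nontrivial R]
    [TopologicalSpace R] [OrderTopology R]
    (X : Set R) (hwf : X.IsWF) :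
    (∀ a ∈ X, ∃ ε > (0 : R), a ∈ {a ∈ X | Ioo a (a + ε) ∩ X = ∅}) ∧
    (∀ ε ε' : R, 0 < ε' → ε' ≤ ε →
      {a ∈ X | Ioo a (a + ε) ∩ X = ∅} ⊆ {a ∈ X | Ioo a (a + ε') ∩ X = ∅}) ∧
    (∀ ε > (0 : R), IsClosed {a ∈ X | Ioo a (a + ε) ∩ X = ∅} ∧
      ∀ x ∈ {a ∈ X | Ioo a (a + ε) ∩ X = ∅},
        x ∉ closure ({a ∈ X | Ioo a (a + ε) ∩ X = ∅} \ {x})) := by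
  -- ε-separation of X(ε)
  have sep : ∀ ε : R, ∀ a ∈ {a ∈ X | Ioo a (a + ε) ∩ X = ∅},
      ∀ b ∈ {a ∈ X | Ioo a (a + ε) ∩ X = ∅}, a < b → a + ε ≤ b := by
    rintro ε a ⟨haX, ha⟩ b ⟨hbX, -⟩ hab
    by_contra h
    push_neg at h
    have : b ∈ Ioo a (a + ε) ∩ X := ⟨⟨hab, h⟩, hbX⟩
    rw [ha] at this
    exact this
  refine ⟨?_, ?_, ?_⟩
  · -- covering
    intro a haX
    rcases (X ∩ Ioi a).eq_empty_or_nonempty with hne | hne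
    · obtain ⟨x, hx⟩ := exists_ne (0 : R)
      refine ⟨|x|, abs_pos.mpr hx, haX, ?_⟩
      ext y
      simp only [mem_inter_iff, mem_Ioo, mem_empty_iff_false, iff_false, not_and]
      intro hy hyX
      have : y ∈ X ∩ Ioi a := ⟨hyX, hy.1⟩
      rw [hne] at this
      exact this.elim
    · have hwf' : (X ∩ Ioi a).IsWF := hwf.mono inter_subset_left
      set b := hwf'.min hne with hb
      have hbmem : b ∈ X ∩ Ioi a := hwf'.min_mem hne
      have hab : a < b := hbmem.2
      refine ⟨b - a, sub_pos.mpr hab, haX, ?_⟩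
      have : a + (b - a) = b := by abel
      rw [this]
      ext y
      simp only [mem_inter_iff, mem_Ioo, mem_empty_iff_false, iff_false, not_and]
      intro hy hyX
      exact hwf'.not_lt_min hne ⟨hyX, hy.1⟩ hy.2
  · -- monotone
    rintro ε ε' hε' hle a ⟨haX, ha⟩
    refine ⟨haX, ?_⟩
    have : Ioo a (a + ε') ⊆ Ioo a (a + ε) :=
      Ioo_subset_Ioo le_rfl (add_le_add_right hle a)
    rw [← subset_empty_iff, ← ha]
    exact inter_subset_inter_left _ this
  · intro ε hε
    set Y := {a ∈ X | Ioo a (a + ε) ∩ X = ∅} with hY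
    obtain ⟨c, hc0, hcε⟩ := exists_between hε
    set δ := min c (ε - c) with hδ
    have hδ0 : 0 < δ := lt_min hc0 (sub_pos.mpr hcε)
    have hδε : δ + δ ≤ ε := by
      have h1 : δ ≤ c := min_le_left _ _
      have h2 : δ ≤ ε - c := min_le_right _ _
      calc δ + δ ≤ c + (ε - c) := add_le_add h1 h2
        _ = ε := by abel
    -- any open interval of radius δ contains at most one point of Y
    have key : ∀ x : R, ∀ y ∈ Ioo (x - δ) (x + δ) ∩ Y, ∀ z ∈ Ioo (x - δ) (x + δ) ∩ Y, y = z := by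
      intro x y hy z hz
      by_contra hne
      have contra : ∀ u v : R, u ∈ Ioo (x - δ) (x + δ) ∩ Y → v ∈ Ioo (x - δ) (x + δ) ∩ Y →
          u < v → False := by
        intro u v hu hv huv
        have hsep := sep ε u hu.2 v hv.2 huv
        have h3 : x - δ + ε < v := lt_of_lt_of_le (add_lt_add_left hu.1.1 ε) hsep
        have h4 : x - δ + ε < x + δ := h3.trans hv.1.2
        have h6 := sub_lt_sub_right h4 (x - δ)
        have e1 : x - δ + ε - (x - δ) = ε := by abel
        have e2 : x + δ - (x - δ) = δ + δ := by abel
        rw [e1, e2] at h6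
        exact absurd hδε (not_le.mpr h6)
      rcases lt_or_gt_of_ne hne with h | h
      · exact contra y z hy hz h
      · exact contra z y hz hy h
    constructor
    · -- closed
      refine isClosed_of_closure_subset ?_
      intro x hx
      have hxU : x ∈ Ioo (x - δ) (x + δ) := ⟨sub_lt_self x hδ0, lt_add_of_pos_right x hδ0⟩
      obtain ⟨y, hy⟩ := (mem_closure_iff.mp hx) _ isOpen_Ioo hxU
      have hy : y ∈ Ioo (x - δ) (x + δ) ∩ Y := ⟨hy.1, hy.2⟩
      -- x is in the closure of {y}
      have hxy : x ∈ closure ({y} : Set R) := by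
        rw [mem_closure_iff]
        intro o ho hxo
        obtain ⟨z, hz⟩ := (mem_closure_iff.mp hx) (o ∩ Ioo (x - δ) (x + δ))
          (ho.inter isOpen_Ioo) ⟨hxo, hxU⟩
        have : z = y := key x z ⟨hz.1.2, hz.2⟩ y hy
        exact ⟨z, hz.1.1, this⟩
      rw [closure_singleton] at hxy
      rw [hxy]
      exact hy.2
    · -- discrete
      intro x hx hcl
      have hxU : x ∈ Ioo (x - δ) (x + δ) := ⟨sub_lt_self x hδ0, lt_add_of_pos_right x hδ0⟩
      obtain ⟨y, hy⟩ := (mem_closure_iff.mp hcl) _ isOpen_Ioo hxU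
      exact hy.2.2 (key x y ⟨hy.1, hy.2.1⟩ x ⟨hxU, hx⟩)
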